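/- Let n, m ≥ 1, let ρ₁ be a quantum metric on qMₙ(ℂ) and ρ₂ a quantum metric on qMₘ(ℂ), and let r be a real number with r > 0 and r ≥ (1/2)·max(‖ρ₁‖, ‖ρ₂‖), where ‖·‖ is the ℓ²-operator norm. Let I := Fin n ⊕ Fin m and define the matrix ρ indexed by I × I by: ρ_{(i,j),(k,l)} = (ρ₁)_{(i,j),(k,l)} if i,j,k,l all lie in Fin n; ρ_{(i,j),(k,l)} = (ρ₂)_{(i,j),(k,l)} if i,j,k,l all lie in Fin m; ρ_{(i,j),(k,l)} = r·δ_{ik} δ_{jl} if i,k ∈ Fin n and j,l ∈ Fin m, or if i,k ∈ Fin m and j,l ∈ Fin n; and ρ_{(i,j),(k,l)} = 0 otherwise. Let P_δ^⊕ be the matrix indexed by I × I that agrees with the symmetric projection P_δ,n on entries with all four indices in Fin n, agrees with P_δ,m on entries with all four indices in Fin m, and is 0 elsewhere. Then ρ satisfies: (i)' ρ is positive semidefinite; (ii)' ρ P_δ^⊕ = P_δ^⊕ ρ = 0; (iii)' every vector x ∈ ℂ^(I × I) with ρ x = 0 lies in the range of P_δ^⊕; (iv)' 𝔉(ρ) =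 ρ, where 𝔉(ρ)_{(i,j),(k,l)} = ρ_{(j,i),(l,k)}; (v)' ρ ⊗ 1 + 1 ⊗ ρ − 𝔐(ρ) is positive semidefinite, where for matrices indexed by I × I × I one sets 𝔐(ρ)_{(i,k,j),(i',k',j')} := δ_{kk'} ρ_{(i,j),(i',j')}, (ρ ⊗ 1)_{(i,j,k),(i',j',k')} := ρ_{(i,j),(i',j')} δ_{kk'}, (1 ⊗ ρ)_{(i,j,k),(i',j',k')} := δ_{ii'} ρ_{(j,k),(j',k')}. -/

import Mathlib

open Matrix
open scoped ComplexOrder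

variable {ι : Type*} [Fintype ι] [DecidableEq ι]

/-- The flip `𝔉`, with `𝔉(a ⊗ b) = b ⊗ a`: `𝔉(ρ)_{(i,j),(k,l)} = ρ_{(j,i),(l,k)}`. -/
def flipOp (ρ : Matrix (ι × ι) (ι × ι) ℂ) : Matrix (ι × ι) (ι × ι) ℂ :=
  fun p q => ρ (p.2, p.1) (q.2, q.1)

/-- The swap matrix `S_{(i,j),(k,l)} = δ_{il} δ_{jk}`. -/
def swapMatrix : Matrix (ι × ι) (ι × ι) ℂ :=
  fun p q => if p.1 = q.2 ∧ p.2 = q.1 then 1 else 0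

/-- `P_δ = (1 + S)/2`, the orthogonal projection onto the symmetric subspace:
the characteristic function of the diagonal for `Mₙ(ℂ)` in its identity
representation. -/
noncomputable def Pdelta : Matrix (ι × ι) (ι × ι) ℂ :=
  (2 : ℂ)⁻¹ • (1 + swapMatrix)

/-- `ρ ⊗ 1` on triple indices: `(ρ ⊗ 1)_{(i,j,k),(i',j',k')} = ρ_{(i,j),(i',j')} δ_{kk'}`. -/
def tensorOne (ρ : Matrix (ι × ι) (ι × ι) ℂ) : Matrix (ι × ι × ι) (ι × ι × ι) ℂ :=
  fun p q => ρ (p.1, p.2.1) (q.1, q.2.1) * (if p.2.2 = q.2.2 then 1 else 0)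

/-- `1 ⊗ ρ` on triple indices: `(1 ⊗ ρ)_{(i,j,k),(i',j',k')} = δ_{ii'} ρ_{(j,k),(j',k')}`. -/
def oneTensor (ρ : Matrix (ι × ι) (ι × ι) ℂ) : Matrix (ι × ι × ι) (ι × ι × ι) ℂ :=
  fun p q => (if p.1 = q.1 then 1 else 0) * ρ (p.2.1, p.2.2) (q.2.1, q.2.2)

/-- The middle-unit map `𝔐`, with `𝔐(a ⊗ b) = a ⊗ 1 ⊗ b`:
`𝔐(ρ)_{(i,k,j),(i',k',j')} = δ_{kk'} ρ_{(i,j),(i',j')}`. -/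
def midUnit (ρ : Matrix (ι × ι) (ι × ι) ℂ) : Matrix (ι × ι × ι) (ι × ι × ι) ℂ :=
  fun p q => (if p.2.1 = q.2.1 then 1 else 0) * ρ (p.1, p.2.2) (q.1, q.2.2)

/-- A quantum metric on `qMₙ(ℂ)` (w.r.t. the identity representation): a matrix
`ρ ∈ Mₙ(ℂ) ⊗ Mₙ(ℂ)` satisfying (i)' positivity, (ii)' `ρ P_δ = P_δ ρ = 0`,
(iii)' the kernel of `ρ` is contained in the range of `P_δ`, (iv)' `𝔉(ρ) = ρ`, and
(v)' `ρ ⊗ 1 + 1 ⊗ ρ − 𝔐(ρ) ≥ 0`. -/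
noncomputable def IsQuantumMetric (ρ : Matrix (ι × ι) (ι × ι) ℂ) : Prop :=
  ρ.PosSemidef ∧
  (ρ * Pdelta = 0 ∧ Pdelta * ρ = 0) ∧
  (∀ x : ι × ι → ℂ, ρ.mulVec x = 0 → x ∈ LinearMap.range (Pdelta (ι := ι)).mulVecLin) ∧
  flipOp ρ = ρ ∧
  (tensorOne ρ + oneTensor ρ - midUnit ρ).PosSemidef

variable {n m : ℕ}

/-- The direct-sum quantum metric of Theorem 3: `ρ = ρ₁ + ρ₂ + r·1_{A₁⊗A₂} + r·1_{A₂⊗A₁}`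
realized as a matrix indexed by `(Fin n ⊕ Fin m) × (Fin n ⊕ Fin m)`. -/
def rhoSum (ρ₁ : Matrix (Fin n × Fin n) (Fin n × Fin n) ℂ)
    (ρ₂ : Matrix (Fin m × Fin m) (Fin m × Fin m) ℂ) (r : ℝ) :
    Matrix ((Fin n ⊕ Fin m) × (Fin n ⊕ Fin m)) ((Fin n ⊕ Fin m) × (Fin n ⊕ Fin m)) ℂ :=
  fun p q =>
    match p, q with
    | (Sum.inl i, Sum.inl j), (Sum.inl k, Sum.inl l) => ρ₁ (i, j) (k, l)
    | (Sum.inr i, Sum.inr j), (Sum.inr k, Sum.inr l) => ρ₂ (i, j) (k, l)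
    | (Sum.inl i, Sum.inr j), (Sum.inl k, Sum.inr l) =>
        (r : ℂ) * (if i = k then 1 else 0) * (if j = l then 1 else 0)
    | (Sum.inr i, Sum.inl j), (Sum.inr k, Sum.inl l) =>
        (r : ℂ) * (if i = k then 1 else 0) * (if j = l then 1 else 0)
    | _, _ => 0

/-- The direct-sum diagonal projection `P_δ^⊕`: it agrees with `P_δ,n` on entries with
all four indices in `Fin n`, with `P_δ,m` on entries with all four indices in `Fin m`,
and is `0` elsewhere. -/
noncomputable def PdeltaSum (n m : ℕ) :
    Matrix ((Fin n ⊕ Fin m) × (Fin n ⊕ Fin m)) ((Fin n ⊕ Fin m) × (Fin n ⊕ Fin m)) ℂ :=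
  fun p q =>
    match p, q with
    | (Sum.inl i, Sum.inl j), (Sum.inl k, Sum.inl l) => Pdelta (ι := Fin n) (i, j) (k, l)
    | (Sum.inr i, Sum.inr j), (Sum.inr k, Sum.inr l) => Pdelta (ι := Fin m) (i, j) (k, l)
    | _, _ => 0

set_option linter.unusedSectionVars false

section EmbHelpers

variable {κ ι' : Type*} [Fintype κ] [DecidableEq κ] [Fintype ι'] [DecidableEq ι']

/-- The "embedding matrix" of an injection `g`. -/
def emb (g : κ → ι') : Matrix ι' κ ℂ := fun i a => if g a = i then 1 else 0

lemma embBlock_posSemidef (g : κ → ι') {N : Matrix κ κ ℂ} (hN : N.PosSemidef) :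
    (emb g * N * (emb g)ᴴ).PosSemidef :=
  hN.mul_mul_conjTranspose_same _

lemma psd_smul_one {c : ℝ} (hc : 0 ≤ c) : ((c : ℂ) • (1 : Matrix κ κ ℂ)).PosSemidef := by
  have h : (c : ℂ) • (1 : Matrix κ κ ℂ) = Matrix.diagonal (fun _ => (c : ℂ)) := by
    ext i j
    by_cases hij : i = j <;> simp [Matrix.one_apply, Matrix.diagonal, hij]
  rw [h]
  refine Matrix.PosSemidef.diagonal fun i => ?_
  have h0 : (0 : ℂ) ≤ (c : ℂ) := by exact_mod_cast hc
  simpa using h0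

lemma psd_sum {α : Type*} (s : Finset α) (f : α → Matrix κ κ ℂ)
    (h : ∀ a ∈ s, (f a).PosSemidef) : (∑ a ∈ s, f a).PosSemidef :=
  Finset.sum_induction f _ (fun _ _ ha hb => ha.add hb) Matrix.PosSemidef.zero h

open scoped InnerProductSpace in
lemma sub_psd_of_norm_le {M : Matrix κ κ ℂ} (hM : M.IsHermitian) {c : ℝ}
    (hc : ‖toEuclideanCLM (𝕜 := ℂ) M‖ ≤ c) : ((c : ℂ) • 1 - M).PosSemidef := by
  set A := toEuclideanCLM (𝕜 := ℂ) M with hA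
  have hsa : _root_.IsSelfAdjoint A := by
    rw [_root_.IsSelfAdjoint, hA, ← map_star]
    exact congrArg _ hM
  rw [Matrix.posSemidef_iff_dotProduct_mulVec]
  constructor
  · simp only [Matrix.IsHermitian, conjTranspose_sub, conjTranspose_smul, conjTranspose_one,
      hM.eq, Complex.star_def, Complex.conj_ofReal]
  · intro x
    set x' : EuclideanSpace ℂ κ := (WithLp.equiv 2 _).symm x with hx'
    have h2 : star x ⬝ᵥ M.mulVec x = inner ℂ x' (A x') := by
      rw [EuclideanSpace.inner_eq_star_dotProduct]
      simp [hA, hx', Matrix.toLin'_apply, dotProduct, mul_comm]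
    have h3 : star x ⬝ᵥ x = (‖x'‖ ^ 2 : ℝ) := by
      have := @inner_self_eq_norm_sq_to_K ℂ _ _ _ _ x'
      rw [EuclideanSpace.inner_eq_star_dotProduct] at this
      simpa [hx', dotProduct, mul_comm] using this
    have h1 : star x ⬝ᵥ ((c : ℂ) • 1 - M).mulVec x
        = ((c * ‖x'‖ ^ 2 : ℝ) : ℂ) - inner ℂ x' (A x') := by
      rw [Matrix.sub_mulVec, dotProduct_sub, smul_mulVec, Matrix.one_mulVec,
        dotProduct_smul, smul_eq_mul, h2, h3]
      push_cast
      ring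
    rw [h1]
    set z : ℂ := inner ℂ x' (A x') with hz
    have hzr : (starRingEnd ℂ) z = z := by
      calc (starRingEnd ℂ) z = inner ℂ (A x') x' := inner_conj_symm _ _
        _ = inner ℂ ((ContinuousLinearMap.adjoint A) x') x' := by rw [hsa.adjoint_eq]
        _ = z := ContinuousLinearMap.adjoint_inner_left A x' x'
    have him : z.im = 0 := by
      have := congrArg Complex.im hzr
      simp only [Complex.conj_im] at this
      linarith
    have hre : z.re ≤ c * ‖x'‖ ^ 2 := by
      calc z.re ≤ ‖z‖ := Complex.re_le_norm z
        _ ≤ ‖x'‖ * ‖A x'‖ := norm_inner_le_norm x' (A x')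
        _ ≤ ‖x'‖ * (‖A‖ * ‖x'‖) := by gcongr; exact A.le_opNorm x'
        _ ≤ ‖x'‖ * (c * ‖x'‖) := by gcongr
        _ = c * ‖x'‖ ^ 2 := by ring
    rw [Complex.le_def]
    refine ⟨?_, ?_⟩
    · simp only [Complex.zero_re, Complex.sub_re, Complex.ofReal_re]
      linarith
    · simp only [Complex.zero_im, Complex.sub_im, Complex.ofReal_im, him]
      ring

end EmbHelpers

section Stmt7Aux

variable (n m : ℕ)

/-- Embedding of the `nn` sector. -/
def gnn : Fin n × Fin n → (Fin n ⊕ Fin m) × (Fin n ⊕ Fin m) := fun a => (Sum.inl a.1, Sum.inl a.2)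
def gmm : Fin m × Fin m → (Fin n ⊕ Fin m) × (Fin n ⊕ Fin m) := fun a => (Sum.inr a.1, Sum.inr a.2)
def gnm : Fin n × Fin m → (Fin n ⊕ Fin m) × (Fin n ⊕ Fin m) := fun a => (Sum.inl a.1, Sum.inr a.2)
def gmn : Fin m × Fin n → (Fin n ⊕ Fin m) × (Fin n ⊕ Fin m) := fun a => (Sum.inr a.1, Sum.inl a.2)

/-- Triple index type. -/
abbrev I3 := (Fin n ⊕ Fin m) × (Fin n ⊕ Fin m) × (Fin n ⊕ Fin m)

def g3nnn : Fin n × Fin n × Fin n → I3 n m := fun a => (Sum.inl a.1, Sum.inl a.2.1, Sum.inl a.2.2)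
def g3mmm : Fin m × Fin m × Fin m → I3 n m := fun a => (Sum.inr a.1, Sum.inr a.2.1, Sum.inr a.2.2)
def gA (k : Fin m) : Fin n × Fin n → I3 n m := fun a => (Sum.inl a.1, Sum.inl a.2, Sum.inr k)
def gB (i : Fin m) : Fin n × Fin n → I3 n m := fun a => (Sum.inr i, Sum.inl a.1, Sum.inl a.2)
def gC (k : Fin n) : Fin m × Fin m → I3 n m := fun a => (Sum.inr a.1, Sum.inr a.2, Sum.inl k)
def gD (i : Fin n) : Fin m × Fin m → I3 n m := fun a => (Sum.inl i, Sum.inr a.1, Sum.inr a.2)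
def gE (j : Fin m) : Fin n × Fin n → I3 n m := fun a => (Sum.inl a.1, Sum.inr j, Sum.inl a.2)
def gF (j : Fin n) : Fin m × Fin m → I3 n m := fun a => (Sum.inr a.1, Sum.inl j, Sum.inr a.2)

variable {n m}

lemma rhoSum_decomp (ρ₁ : Matrix (Fin n × Fin n) (Fin n × Fin n) ℂ)
    (ρ₂ : Matrix (Fin m × Fin m) (Fin m × Fin m) ℂ) (r : ℝ) :
    rhoSum ρ₁ ρ₂ r = emb (gnn n m) * ρ₁ * (emb (gnn n m))ᴴ + emb (gmm n m) * ρ₂ * (emb (gmm n m))ᴴ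
      + emb (gnm n m) * ((r : ℂ) • (1 : Matrix (Fin n × Fin m) (Fin n × Fin m) ℂ)) * (emb (gnm n m))ᴴ
      + emb (gmn n m) * ((r : ℂ) • (1 : Matrix (Fin m × Fin n) (Fin m × Fin n) ℂ)) * (emb (gmn n m))ᴴ := by
  ext ⟨i | i, j | j⟩ ⟨k | k, l | l⟩ <;>
    simp [rhoSum, emb, gnn, gmm, gnm, gmn, Matrix.mul_apply, Matrix.conjTranspose_apply,
      Fintype.sum_prod_type, Matrix.one_apply, Matrix.smul_apply, Prod.ext_iff, ite_and,
      apply_ite (starRingEnd ℂ), mul_ite, ite_mul, smul_eq_mul, mul_comm] <;>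
    (try (split_ifs <;> simp_all))

set_option maxHeartbeats 2000000 in
lemma rhoSum_T_decomp (ρ₁ : Matrix (Fin n × Fin n) (Fin n × Fin n) ℂ)
    (ρ₂ : Matrix (Fin m × Fin m) (Fin m × Fin m) ℂ) (r : ℝ) :
    tensorOne (rhoSum ρ₁ ρ₂ r) + oneTensor (rhoSum ρ₁ ρ₂ r) - midUnit (rhoSum ρ₁ ρ₂ r)
    = emb (g3nnn n m) * (tensorOne ρ₁ + oneTensor ρ₁ - midUnit ρ₁) * (emb (g3nnn n m))ᴴ
    + emb (g3mmm n m) * (tensorOne ρ₂ + oneTensor ρ₂ - midUnit ρ₂) * (emb (g3mmm n m))ᴴ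
    + ∑ k : Fin m, emb (gA n m k) * ρ₁ * (emb (gA n m k))ᴴ
    + ∑ i : Fin m, emb (gB n m i) * ρ₁ * (emb (gB n m i))ᴴ
    + ∑ k : Fin n, emb (gC n m k) * ρ₂ * (emb (gC n m k))ᴴ
    + ∑ i : Fin n, emb (gD n m i) * ρ₂ * (emb (gD n m i))ᴴ
    + ∑ j : Fin m, emb (gE n m j) *
        (((2 * r : ℝ) : ℂ) • (1 : Matrix (Fin n × Fin n) (Fin n × Fin n) ℂ) - ρ₁) * (emb (gE n m j))ᴴ
    + ∑ j : Fin n, emb (gF n m j) *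
        (((2 * r : ℝ) : ℂ) • (1 : Matrix (Fin m × Fin m) (Fin m × Fin m) ℂ) - ρ₂) * (emb (gF n m j))ᴴ := by
  ext ⟨i | i, j | j, k | k⟩ ⟨i' | i', j' | j', k' | k'⟩ <;>
    simp [rhoSum, emb, g3nnn, g3mmm, gA, gB, gC, gD, gE, gF, tensorOne, oneTensor, midUnit,
      Matrix.mul_apply, Matrix.conjTranspose_apply, Matrix.sum_apply,
      Fintype.sum_prod_type, Matrix.one_apply, Matrix.smul_apply, Prod.ext_iff, ite_and,
      apply_ite (starRingEnd ℂ), mul_ite, ite_mul, smul_eq_mul, mul_comm] <;>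
    (try (split_ifs <;> simp_all <;> try ring))

end Stmt7Aux

set_option maxHeartbeats 1000000

/-- Theorem 3 of the paper for `A₁ = Mₙ(ℂ)`, `A₂ = Mₘ(ℂ)`: if `ρ₁`, `ρ₂`
are quantum metrics and `r > 0` with `r ≥ 2⁻¹ max(‖ρ₁‖, ‖ρ₂‖)` (ℓ²-operator norms),
then the direct-sum matrix `ρ` satisfies (i)'-(v)' with respect to `P_δ^⊕`. -/
theorem stmt7 (hn : 1 ≤ n) (hm : 1 ≤ m)
    (ρ₁ : Matrix (Fin n × Fin n) (Fin n × Fin n) ℂ)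
    (ρ₂ : Matrix (Fin m × Fin m) (Fin m × Fin m) ℂ)
    (h₁ : IsQuantumMetric ρ₁) (h₂ : IsQuantumMetric ρ₂)
    (r : ℝ) (hr_pos : 0 < r)
    (hr : 2⁻¹ * max ‖toEuclideanCLM (𝕜 := ℂ) ρ₁‖ ‖toEuclideanCLM (𝕜 := ℂ) ρ₂‖ ≤ r) :
    (rhoSum ρ₁ ρ₂ r).PosSemidef ∧
    (rhoSum ρ₁ ρ₂ r * PdeltaSum n m = 0 ∧ PdeltaSum n m * rhoSum ρ₁ ρ₂ r = 0) ∧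
    (∀ x : (Fin n ⊕ Fin m) × (Fin n ⊕ Fin m) → ℂ, (rhoSum ρ₁ ρ₂ r).mulVec x = 0 →
      x ∈ LinearMap.range (PdeltaSum n m).mulVecLin) ∧
    flipOp (rhoSum ρ₁ ρ₂ r) = rhoSum ρ₁ ρ₂ r ∧
    (tensorOne (rhoSum ρ₁ ρ₂ r) + oneTensor (rhoSum ρ₁ ρ₂ r) -
        midUnit (rhoSum ρ₁ ρ₂ r)).PosSemidef := by
  obtain ⟨hP1, ⟨hPd1l, hPd1r⟩, hker1, hflip1, hT1⟩ := h₁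
  obtain ⟨hP2, ⟨hPd2l, hPd2r⟩, hker2, hflip2, hT2⟩ := h₂
  have hn1 : ‖toEuclideanCLM (𝕜 := ℂ) ρ₁‖ ≤ 2 * r := by
    have := le_max_left ‖toEuclideanCLM (𝕜 := ℂ) ρ₁‖ ‖toEuclideanCLM (𝕜 := ℂ) ρ₂‖
    linarith
  have hn2 : ‖toEuclideanCLM (𝕜 := ℂ) ρ₂‖ ≤ 2 * r := by
    have := le_max_right ‖toEuclideanCLM (𝕜 := ℂ) ρ₁‖ ‖toEuclideanCLM (𝕜 := ℂ) ρ₂‖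
    linarith
  refine ⟨?_, ⟨?_, ?_⟩, ?_, ?_, ?_⟩
  · -- (i)
    rw [rhoSum_decomp]
    exact (((embBlock_posSemidef _ hP1).add (embBlock_posSemidef _ hP2)).add
      (embBlock_posSemidef _ (psd_smul_one hr_pos.le))).add
      (embBlock_posSemidef _ (psd_smul_one hr_pos.le))
  · -- (ii) left
    have e1 := fun (p q : Fin n × Fin n) => congrFun (congrFun hPd1l p) q
    have e2 := fun (p q : Fin m × Fin m) => congrFun (congrFun hPd2l p) q
    simp only [Matrix.mul_apply, Matrix.zero_apply, Fintype.sum_prod_type] at e1 e2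
    ext ⟨i | i, j | j⟩ ⟨k | k, l | l⟩ <;>
      simp [Matrix.mul_apply, rhoSum, PdeltaSum, Fintype.sum_prod_type, Fintype.sum_sum_type] <;>
      first
        | exact e1 (i, j) (k, l)
        | exact e2 (i, j) (k, l)
  · -- (ii) right
    have e1 := fun (p q : Fin n × Fin n) => congrFun (congrFun hPd1r p) q
    have e2 := fun (p q : Fin m × Fin m) => congrFun (congrFun hPd2r p) q
    simp only [Matrix.mul_apply, Matrix.zero_apply, Fintype.sum_prod_type] at e1 e2
    ext ⟨i | i, j | j⟩ ⟨k | k, l | l⟩ <;>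
      simp [Matrix.mul_apply, rhoSum, PdeltaSum, Fintype.sum_prod_type, Fintype.sum_sum_type] <;>
      first
        | exact e1 (i, j) (k, l)
        | exact e2 (i, j) (k, l)
  · -- (iii)
    intro x hx
    have hx1 : ρ₁.mulVec (fun a => x (Sum.inl a.1, Sum.inl a.2)) = 0 := by
      funext a
      obtain ⟨a1, a2⟩ := a
      have h := congrFun hx (Sum.inl a1, Sum.inl a2)
      simp only [Matrix.mulVec, dotProduct, Fintype.sum_prod_type, Fintype.sum_sum_type,
        rhoSum, Pi.zero_apply, mul_zero, zero_mul, Finset.sum_const_zero, add_zero,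
        zero_add] at h ⊢
      exact h
    have hx2 : ρ₂.mulVec (fun a => x (Sum.inr a.1, Sum.inr a.2)) = 0 := by
      funext a
      obtain ⟨a1, a2⟩ := a
      have h := congrFun hx (Sum.inr a1, Sum.inr a2)
      simp only [Matrix.mulVec, dotProduct, Fintype.sum_prod_type, Fintype.sum_sum_type,
        rhoSum, Pi.zero_apply, mul_zero, zero_mul, Finset.sum_const_zero, add_zero,
        zero_add] at h ⊢
      exact h
    have hxnm : ∀ (a : Fin n) (b : Fin m), x (Sum.inl a, Sum.inr b) = 0 := by
      intro a b
      have h := congrFun hx (Sum.inl a, Sum.inr b)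
      simp only [Matrix.mulVec, dotProduct, Fintype.sum_prod_type, Fintype.sum_sum_type,
        rhoSum, Pi.zero_apply, mul_zero, zero_mul, Finset.sum_const_zero, add_zero, zero_add,
        mul_ite, ite_mul, mul_one, one_mul, Finset.sum_ite_eq, Finset.sum_ite_eq',
        Finset.mem_univ, if_true] at h
      simpa [Complex.ofReal_ne_zero.mpr hr_pos.ne'] using h
    have hxmn : ∀ (a : Fin m) (b : Fin n), x (Sum.inr a, Sum.inl b) = 0 := by
      intro a b
      have h := congrFun hx (Sum.inr a, Sum.inl b)
      simp only [Matrix.mulVec, dotProduct, Fintype.sum_prod_type, Fintype.sum_sum_type,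
        rhoSum, Pi.zero_apply, mul_zero, zero_mul, Finset.sum_const_zero, add_zero, zero_add,
        mul_ite, ite_mul, mul_one, one_mul, Finset.sum_ite_eq, Finset.sum_ite_eq',
        Finset.mem_univ, if_true] at h
      simpa [Complex.ofReal_ne_zero.mpr hr_pos.ne'] using h
    obtain ⟨y₁, hy₁⟩ := hker1 _ hx1
    obtain ⟨y₂, hy₂⟩ := hker2 _ hx2
    let y : (Fin n ⊕ Fin m) × (Fin n ⊕ Fin m) → ℂ := fun p =>
      match p with
      | (Sum.inl a, Sum.inl b) => y₁ (a, b)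
      | (Sum.inr a, Sum.inr b) => y₂ (a, b)
      | (Sum.inl _, Sum.inr _) => 0
      | (Sum.inr _, Sum.inl _) => 0
    refine ⟨y, ?_⟩
    funext p
    obtain ⟨i | i, j | j⟩ := p
    · have h := congrFun hy₁ (i, j)
      simp only [Matrix.mulVecLin_apply, Matrix.mulVec, dotProduct,
        Fintype.sum_prod_type, Fintype.sum_sum_type, PdeltaSum, y, mul_zero, zero_mul,
        Finset.sum_const_zero, add_zero, zero_add] at h ⊢
      exact h
    · simp only [Matrix.mulVecLin_apply, Matrix.mulVec, dotProduct,
        Fintype.sum_prod_type, Fintype.sum_sum_type, PdeltaSum, y, mul_zero, zero_mul,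
        Finset.sum_const_zero, add_zero, zero_add]
      exact (hxnm i j).symm
    · simp only [Matrix.mulVecLin_apply, Matrix.mulVec, dotProduct,
        Fintype.sum_prod_type, Fintype.sum_sum_type, PdeltaSum, y, mul_zero, zero_mul,
        Finset.sum_const_zero, add_zero, zero_add]
      exact (hxmn i j).symm
    · have h := congrFun hy₂ (i, j)
      simp only [Matrix.mulVecLin_apply, Matrix.mulVec, dotProduct,
        Fintype.sum_prod_type, Fintype.sum_sum_type, PdeltaSum, y, mul_zero, zero_mul,
        Finset.sum_const_zero, add_zero, zero_add] at h ⊢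
      exact h
  · -- (iv)
    have e1 : ∀ i j k l : Fin n, ρ₁ (j, i) (l, k) = ρ₁ (i, j) (k, l) :=
      fun i j k l => congrFun (congrFun hflip1 (i, j)) (k, l)
    have e2 : ∀ i j k l : Fin m, ρ₂ (j, i) (l, k) = ρ₂ (i, j) (k, l) :=
      fun i j k l => congrFun (congrFun hflip2 (i, j)) (k, l)
    ext ⟨i | i, j | j⟩ ⟨k | k, l | l⟩ <;>
      simp [flipOp, rhoSum] <;>
      first
        | exact e1 i j k l
        | exact e2 i j k l
        | (split_ifs <;> rfl)
  · -- (v)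
    rw [rhoSum_T_decomp]
    exact (((((((embBlock_posSemidef _ hT1).add (embBlock_posSemidef _ hT2)).add
      (psd_sum _ _ fun k _ => embBlock_posSemidef _ hP1)).add
      (psd_sum _ _ fun i _ => embBlock_posSemidef _ hP1)).add
      (psd_sum _ _ fun k _ => embBlock_posSemidef _ hP2)).add
      (psd_sum _ _ fun i _ => embBlock_posSemidef _ hP2)).add
      (psd_sum _ _ fun j _ => embBlock_posSemidef _ (sub_psd_of_norm_le hP1.1 hn1))).add
      (psd_sum _ _ fun j _ => embBlock_posSemidef _ (sub_psd_of_norm_le hP2.1 hn2))
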